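/- Fix integers p₁, p₂, p₃ ≥ 2 and let 𝕃 be the abelian group with generators x⃗₁, x⃗₂, x⃗₃ and relations p₁x⃗₁ = p₂x⃗₂ = p₃x⃗₃ (the quotient of ℤ³ by the subgroup generated by p₁e₁ − p₂e₂ and p₂e₂ − p₃e₃); set c⃗ := p₁x⃗₁. Let l₁,l₂,l₃ and k₁,k₂,k₃ be integers with 0 ≤ lᵢ ≤ pᵢ−2 and 0 ≤ kᵢ ≤ pᵢ−2, let λ₁,λ₂,λ₃ be integers with 0 ≤ λᵢ ≤ pᵢ−1, let λ ∈ ℤ, and set x⃗ = Σᵢ lᵢx⃗ᵢ, y⃗ = Σᵢ kᵢx⃗ᵢ, z⃗ = Σᵢ λᵢx⃗ᵢ + λc⃗. Then the following two conditions hold simultaneously: (a) for each i, the unordered pair {pᵢ−1, lᵢ} equals the unordered pair {(λᵢ−1) mod pᵢ, (kᵢ+λᵢ) mod pᵢ} of residues in [0, pᵢ−1], and (b) −x⃗ + y⃗ + 2z⃗ = 0 in 𝕃 — if and only if either (i) kᵢ = lᵢ and λᵢ = 0 for all i and λ = 0, or (ii) there exists j ∈ {1,2,3} such that kⱼ = lⱼ,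 λⱼ = 0, kᵢ = pᵢ−2−lᵢ and λᵢ = lᵢ+1 for both i ≠ j, and λ = −1. -/
import Mathlib


/-- The rank-one abelian group 𝕃(p₁,p₂,p₃): the quotient of ℤ³ by the subgroup
generated by p₁e₁ − p₂e₂ and p₂e₂ − p₃e₃, so that p₁x⃗₁ = p₂x⃗₂ = p₃x⃗₃. -/
def Lrel (p : Fin 3 → ℤ) : AddSubgroup (Fin 3 → ℤ) :=
  AddSubgroup.closure {![p 0, -p 1, 0], ![0, p 1, -p 2]}

abbrev LGroup (p : Fin 3 → ℤ) := (Fin 3 → ℤ) ⧸ Lrel p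

/-- The generators x⃗₁, x⃗₂, x⃗₃ of 𝕃. -/
def xg (p : Fin 3 → ℤ) (i : Fin 3) : LGroup p := QuotientAddGroup.mk (Pi.single i 1)

/-- The canonical element c⃗ = p₁x⃗₁. -/
def cg (p : Fin 3 → ℤ) : LGroup p := p 0 • xg p 0

/-- The dualizing element ω⃗ = c⃗ − x⃗₁ − x⃗₂ − x⃗₃. -/
def wg (p : Fin 3 → ℤ) : LGroup p := cg p - xg p 0 - xg p 1 - xg p 2

lemma pair_eq (a b c d : ℤ) : ({a,b} : Multiset ℤ) = {c,d} ↔ (a=c∧b=d)∨(a=d∧b=c) := by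
  constructor
  · intro h
    have ha : a = c ∨ a = d := by
      have : a ∈ ({c,d} : Multiset ℤ) := h ▸ (by simp)
      simpa using this
    rcases ha with rfl | rfl
    · left
      refine ⟨rfl, ?_⟩
      have h' : (a ::ₘ ({b} : Multiset ℤ)) = (a ::ₘ {d}) := by simpa using h
      exact Multiset.singleton_inj.mp ((Multiset.cons_inj_right a).mp h')
    · right
      refine ⟨rfl, ?_⟩
      have h' : (a ::ₘ {b}) = (a ::ₘ {c}) := by
        rw [show ({a, b} : Multiset ℤ) = a ::ₘ {b} from rfl] at h
        rw [h]; rw [Multiset.pair_comm]; rfl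
      exact Multiset.singleton_inj.mp (Multiset.cons_inj_right a |>.mp h')
  · rintro (⟨rfl, rfl⟩ | ⟨rfl, rfl⟩)
    · rfl
    · exact Multiset.pair_comm a b

lemma sum_smul_xg (p a : Fin 3 → ℤ) :
    (∑ i, a i • xg p i) = (QuotientAddGroup.mk a : LGroup p) := by
  have h : ∀ i, a i • xg p i = (QuotientAddGroup.mk (Pi.single i (a i)) : LGroup p) := by
    intro i
    rw [xg, ← QuotientAddGroup.mk_zsmul]
    congr 1
    ext j
    by_cases hij : j = i
    · subst hij; simp
    · simp [Pi.single_eq_of_ne hij]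
  simp_rw [h]
  rw [show (QuotientAddGroup.mk a : LGroup p) = QuotientAddGroup.mk (∑ i, Pi.single i (a i)) by
    rw [Finset.univ_sum_single]]
  exact (map_sum (QuotientAddGroup.mk' (Lrel p)) (fun i => Pi.single i (a i)) Finset.univ).symm

lemma key (p l k lam : Fin 3 → ℤ) (lc : ℤ) :
    (-(∑ i, l i • xg p i) + (∑ i, k i • xg p i) +
        2 • ((∑ i, lam i • xg p i) + lc • cg p) = 0) ↔
    ∃ m n : ℤ, m • ![p 0, -p 1, 0] + n • ![0, p 1, -p 2]
      = -l + k + 2 • (lam + Pi.single 0 (lc * p 0)) := by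
  have hc : lc • cg p = (QuotientAddGroup.mk (Pi.single 0 (lc * p 0)) : LGroup p) := by
    rw [cg, xg, smul_smul, ← QuotientAddGroup.mk_zsmul]
    congr 1
    ext j
    by_cases hj : j = 0
    · subst hj; simp
    · simp [Pi.single_eq_of_ne hj]
  rw [sum_smul_xg, sum_smul_xg, sum_smul_xg, hc,
    ← QuotientAddGroup.mk_add, ← QuotientAddGroup.mk_nsmul, ← QuotientAddGroup.mk_neg,
    ← QuotientAddGroup.mk_add, ← QuotientAddGroup.mk_add,
    QuotientAddGroup.eq_zero_iff]
  rw [Lrel]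
  rw [AddSubgroup.mem_closure_pair]

lemma emod_cases (a b : ℤ) (hb : 0 < b) (h1 : -b ≤ a) (h2 : a < 2*b) :
    a % b = a ∨ a % b = a - b ∨ a % b = a + b := by
  rcases lt_or_ge a 0 with h | h
  · right; right
    have : (a + b * 1) % b = a % b := Int.add_mul_emod_self_left a b 1
    rw [mul_one] at this
    rw [← this, Int.emod_eq_of_lt (by omega) (by omega)]
  · rcases lt_or_ge a b with h' | h'
    · left; exact Int.emod_eq_of_lt h h'
    · right; left
      have : (a - b + b * 1) % b = (a - b) % b := Int.add_mul_emod_self_left (a - b) b 1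
      rw [mul_one, sub_add_cancel] at this
      rw [this, Int.emod_eq_of_lt (by omega) (by omega)]

/-- Arithmetic core of Proposition 2.3: the class equality conditions (a) and (b) for
E⟨x⃗⟩ ≅ E⟨y⃗⟩(z⃗) hold iff (i) y⃗ = x⃗, z⃗ = 0 or (ii) the reflection case. Here
x⃗ = Σlᵢx⃗ᵢ, y⃗ = Σkᵢx⃗ᵢ, z⃗ = Σλᵢx⃗ᵢ + λc⃗ in normal form. -/
theorem iso_criterion (p l k lam : Fin 3 → ℤ) (lc : ℤ)
    (hp : ∀ i, 2 ≤ p i)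
    (hl : ∀ i, 0 ≤ l i ∧ l i ≤ p i - 2)
    (hk : ∀ i, 0 ≤ k i ∧ k i ≤ p i - 2)
    (hlam : ∀ i, 0 ≤ lam i ∧ lam i ≤ p i - 1) :
    ((∀ i, ({p i - 1, l i} : Multiset ℤ) =
        {(lam i - 1) % p i, (k i + lam i) % p i}) ∧
      -(∑ i, l i • xg p i) + (∑ i, k i • xg p i) +
        2 • ((∑ i, lam i • xg p i) + lc • cg p) = 0) ↔
    ((∀ i, k i = l i ∧ lam i = 0) ∧ lc = 0) ∨
    (∃ j, k j = l j ∧ lam j = 0 ∧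
      (∀ i, i ≠ j → k i = p i - 2 - l i ∧ lam i = l i + 1) ∧ lc = -1) := by
  have hq : ∀ i, (({p i - 1, l i} : Multiset ℤ) =
      {(lam i - 1) % p i, (k i + lam i) % p i}) ↔
      ((k i = l i ∧ lam i = 0) ∨ (k i = p i - 2 - l i ∧ lam i = l i + 1)) := by
    intro i
    have h1 := hp i; have h2 := hl i; have h3 := hk i; have h4 := hlam i
    have c1 := emod_cases (lam i - 1) (p i) (by omega) (by omega) (by omega)
    have c2 := emod_cases (k i + lam i) (p i) (by omega) (by omega) (by omega)
    have d1 : 0 ≤ (lam i - 1) % p i := Int.emod_nonneg _ (by omega)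
    have d2 : 0 ≤ (k i + lam i) % p i := Int.emod_nonneg _ (by omega)
    have d3 : (lam i - 1) % p i < p i := Int.emod_lt_of_pos _ (by omega)
    have d4 : (k i + lam i) % p i < p i := Int.emod_lt_of_pos _ (by omega)
    rw [pair_eq]
    omega
  rw [key]
  simp only [hq]
  constructor
  · rintro ⟨ha, m, n, hmn⟩
    have e0 := congrFun hmn 0
    have e1 := congrFun hmn 1
    have e2 := congrFun hmn 2
    simp [Pi.single_eq_of_ne (show (1:Fin 3) ≠ 0 by decide),
      Pi.single_eq_of_ne (show (2:Fin 3) ≠ 0 by decide)] at e0 e1 e2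
    have hε : ∀ i, ∃ e : ℤ, (e = 0 ∨ e = 1) ∧ -l i + k i + 2*lam i = e * p i ∧
        ((e = 0 ∧ k i = l i ∧ lam i = 0) ∨
         (e = 1 ∧ k i = p i - 2 - l i ∧ lam i = l i + 1)) := by
      intro i
      rcases ha i with ⟨h1, h2⟩ | ⟨h1, h2⟩
      · exact ⟨0, Or.inl rfl, by rw [zero_mul]; omega, Or.inl ⟨rfl, h1, h2⟩⟩
      · exact ⟨1, Or.inr rfl, by rw [one_mul]; have := hp i; omega, Or.inr ⟨rfl, h1, h2⟩⟩
    choose ε hε1 hε2 hε3 using hε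
    have hp0 : p 0 ≠ 0 := by have := hp 0; omega
    have hp1 : p 1 ≠ 0 := by have := hp 1; omega
    have hp2 : p 2 ≠ 0 := by have := hp 2; omega
    have hm : m = ε 0 + 2 * lc := by
      refine mul_right_cancel₀ hp0 ?_
      have := hε2 0
      linear_combination e0 + this
    have hn2 : n = -ε 2 := by
      refine mul_right_cancel₀ hp2 ?_
      have := hε2 2
      linear_combination -e2 - this
    have hn1 : n = m + ε 1 := by
      refine mul_right_cancel₀ hp1 ?_
      have := hε2 1
      linear_combination e1 + this
    have hsum : ε 0 + ε 1 + ε 2 + 2 * lc = 0 := by omega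
    have g0 : ∀ i, ε i = 0 → (k i = l i ∧ lam i = 0) := by
      intro i h
      rcases hε3 i with ⟨_, h1, h2⟩ | ⟨he, _⟩
      · exact ⟨h1, h2⟩
      · omega
    have g1 : ∀ i, ε i = 1 → (k i = p i - 2 - l i ∧ lam i = l i + 1) := by
      intro i h
      rcases hε3 i with ⟨he, _⟩ | ⟨_, h1, h2⟩
      · omega
      · exact ⟨h1, h2⟩
    have b0 := hε1 0; have b1 := hε1 1; have b2 := hε1 2
    rcases b0 with z0 | z0 <;> rcases b1 with z1 | z1 <;> rcases b2 with z2 | z2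
    · exact Or.inl ⟨fun i => by fin_cases i <;> [exact g0 0 z0; exact g0 1 z1; exact g0 2 z2],
        by omega⟩
    all_goals try (exfalso; omega)
    · refine Or.inr ⟨0, (g0 0 z0).1, (g0 0 z0).2, fun i hi => ?_, by omega⟩
      fin_cases i
      · exact absurd rfl hi
      · exact g1 1 z1
      · exact g1 2 z2
    · refine Or.inr ⟨1, (g0 1 z1).1, (g0 1 z1).2, fun i hi => ?_, by omega⟩
      fin_cases i
      · exact g1 0 z0
      · exact absurd rfl hi
      · exact g1 2 z2
    · refine Or.inr ⟨2, (g0 2 z2).1, (g0 2 z2).2, fun i hi => ?_, by omega⟩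
      fin_cases i
      · exact g1 0 z0
      · exact g1 1 z1
      · exact absurd rfl hi
  · rintro (⟨h, rfl⟩ | ⟨j, hj1, hj2, hj3, rfl⟩)
    · refine ⟨fun i => Or.inl (h i), 0, 0, ?_⟩
      have h0 := h 0; have h1 := h 1; have h2 := h 2
      funext i
      fin_cases i <;>
        simp [Pi.single_eq_of_ne (show (1:Fin 3) ≠ 0 by decide),
          Pi.single_eq_of_ne (show (2:Fin 3) ≠ 0 by decide)] <;> omega
    · have ha : ∀ i, (k i = l i ∧ lam i = 0) ∨
          (k i = p i - 2 - l i ∧ lam i = l i + 1) := by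
        intro i
        by_cases hij : i = j
        · subst hij; exact Or.inl ⟨hj1, hj2⟩
        · exact Or.inr (hj3 i hij)
      refine ⟨ha, ?_⟩
      have hj : j = 0 ∨ j = 1 ∨ j = 2 := by fin_cases j <;> simp
      rcases hj with rfl | rfl | rfl
      · have h1 := hj3 1 (by decide); have h2 := hj3 2 (by decide)
        refine ⟨-2, -1, ?_⟩
        funext i
        fin_cases i <;>
          simp [Pi.single_eq_of_ne (show (1:Fin 3) ≠ 0 by decide),
            Pi.single_eq_of_ne (show (2:Fin 3) ≠ 0 by decide)] <;> omega
      · have h1 := hj3 0 (by decide); have h2 := hj3 2 (by decide)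
        refine ⟨-1, -1, ?_⟩
        funext i
        fin_cases i <;>
          simp [Pi.single_eq_of_ne (show (1:Fin 3) ≠ 0 by decide),
            Pi.single_eq_of_ne (show (2:Fin 3) ≠ 0 by decide)] <;> omega
      · have h1 := hj3 0 (by decide); have h2 := hj3 1 (by decide)
        refine ⟨-1, 0, ?_⟩
        funext i
        fin_cases i <;>
          simp [Pi.single_eq_of_ne (show (1:Fin 3) ≠ 0 by decide),
            Pi.single_eq_of_ne (show (2:Fin 3) ≠ 0 by decide)] <;> omega
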